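/- Let Q be an invertible r×r complex matrix. Then there exists a permutation matrix P such that every bottom-right square minor of QP⁻¹ is nonsingular, i.e., for each k = 1, ..., r the submatrix of QP⁻¹ formed by the last k rows and last k columns is invertible. -/

import Mathlib

open Matrix

/-- For any invertible matrix `Q` there is a permutation of the columns after which
every bottom-right square minor is nonsingular. -/
theorem exists_perm_bottomRight_minors_nonsingular {r : ℕ}
    (Q : Matrix (Fin r) (Fin r) ℂ) (hQ : IsUnit Q.det) :
    ∃ σ : Equiv.Perm (Fin r), ∀ k : ℕ, 1 ≤ k → (hk : k ≤ r) →
      IsUnit (((Q.submatrix id σ).submatrix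
        (fun i : Fin k => (⟨r - k + i, by omega⟩ : Fin r))
        (fun j : Fin k => (⟨r - k + j, by omega⟩ : Fin r))).det) := by
  induction r with
  | zero => exact ⟨1, fun k hk1 hk => by omega⟩
  | succ n ih =>
    have hexp := Matrix.det_succ_row_zero Q
    have hne : Q.det ≠ 0 := hQ.ne_zero
    have : ∃ j' : Fin (n+1), (Q.submatrix Fin.succ j'.succAbove).det ≠ 0 := by
      by_contra h
      push_neg at h
      apply hne
      rw [hexp]
      exact Finset.sum_eq_zero fun j _ => by rw [h j, mul_zero]
    obtain ⟨j', hj'⟩ := this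
    set g : Fin n → Fin (n+1) := fun j => Equiv.swap 0 j' j.succ with hg
    have hgne : ∀ j, g j ≠ j' := by
      intro j h
      simp only [hg] at h
      have h2 : j.succ = (0 : Fin (n+1)) := by
        have := congrArg (Equiv.swap 0 j') h
        simpa using this
      exact Fin.succ_ne_zero j h2
    set f : Fin n → Fin n := fun j => (finSuccAboveEquiv j').symm ⟨g j, hgne j⟩ with hf
    have hfinj : Function.Injective f := by
      intro a b hab
      have h1 : (⟨g a, hgne a⟩ : {x : Fin (n+1) // x ≠ j'}) = ⟨g b, hgne b⟩ :=
        (finSuccAboveEquiv j').symm.injective hab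
      have h2 : g a = g b := congrArg Subtype.val h1
      exact Fin.succ_injective _ ((Equiv.swap 0 j').injective h2)
    let e : Equiv.Perm (Fin n) := Equiv.ofBijective f (Finite.injective_iff_bijective.mp hfinj)
    have hse : ∀ j, j'.succAbove (e j) = g j := by
      intro j
      have : finSuccAboveEquiv j' (f j) = ⟨g j, hgne j⟩ := Equiv.apply_symm_apply _ _
      exact (by simpa [finSuccAboveEquiv_apply] using congrArg Subtype.val this : j'.succAbove (f j) = g j)
    set M : Matrix (Fin n) (Fin n) ℂ := Q.submatrix Fin.succ g with hM
    have hMdet : IsUnit M.det := by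
      have hme : M = (Q.submatrix Fin.succ j'.succAbove).submatrix id e := by
        ext i j
        simp [hM, hse j]
      rw [hme, Matrix.det_permute']
      exact ((Equiv.Perm.sign e).isUnit.map (Int.castRingHom ℂ)).mul (IsUnit.mk0 _ hj')
    obtain ⟨τ, hτ⟩ := ih M hMdet
    refine ⟨Equiv.Perm.decomposeFin.symm (j', τ), fun k hk1 hk => ?_⟩
    by_cases hkn : k ≤ n
    · have := hτ k hk1 hkn
      convert this using 2
      ext i j
      have h1 : (⟨n + 1 - k + i, by omega⟩ : Fin (n+1)) = Fin.succ ⟨n - k + i, by omega⟩ := by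
        ext; simp; omega
      have h2 : (⟨n + 1 - k + j, by omega⟩ : Fin (n+1)) = Fin.succ ⟨n - k + j, by omega⟩ := by
        ext; simp; omega
      simp only [Matrix.submatrix_apply, id_eq, h1, h2,
        Equiv.Perm.decomposeFin_symm_apply_succ, hM]
      rfl
    · have hk' : k = n + 1 := by omega
      subst hk'
      have key : IsUnit (Q.submatrix id ⇑(Equiv.Perm.decomposeFin.symm (j', τ))).det := by
        rw [Matrix.det_permute']
        exact ((Equiv.Perm.sign _).isUnit.map (Int.castRingHom ℂ)).mul hQ
      convert key using 2
      ext i j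
      have hi : (⟨n + 1 - (n+1) + ↑i, by omega⟩ : Fin (n+1)) = i := by apply Fin.ext; simp
      have hj2 : (⟨n + 1 - (n+1) + ↑j, by omega⟩ : Fin (n+1)) = j := by apply Fin.ext; simp
      rw [Matrix.submatrix_apply, hi, hj2]
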